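/- arXiv:1702.02361 — 2 statements merged into one kernel-verified Lean document; each statement's English description precedes it below -/
import Mathlib

section
/- Let E and F be nonzero vector bundles on a smooth projective curve X. If μ(E) > μ(F), then there exists a rational number μ such that rk(E_(μ))/rk(E) > rk(F_(μ))/rk(F). -/
open Finset

private lemma aux_telescope (m : ℕ) (f : ℕ → ℚ)
    (hmono : ∀ a b : ℕ, a ≤ b → b ≤ m - 1 → f a ≤ f b)
    (hstrict : ∀ a b : ℕ, a < b → b ≤ m - 1 → f a < f b)
    (t : ℕ) (ht : t ≤ m - 1) :
    f t - f 0 = ∑ j ∈ Finset.range (m - 1),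
      (if f (j + 1) ≤ f t then f (j + 1) - f j else 0) := by
  have hsplit : Finset.range (m - 1) = Finset.Ico 0 t ∪ Finset.Ico t (m - 1) := by
    rw [Finset.range_eq_Ico, Finset.Ico_union_Ico_eq_Ico (Nat.zero_le t) ht]
  rw [hsplit, Finset.sum_union (by
    simp [Finset.disjoint_left]; omega)]
  have h1 : ∑ j ∈ Finset.Ico 0 t, (if f (j + 1) ≤ f t then f (j + 1) - f j else 0)
      = f t - f 0 := by
    rw [← Finset.range_eq_Ico]
    rw [Finset.sum_congr rfl (fun j hj => ?_), Finset.sum_range_sub]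
    rw [Finset.mem_range] at hj
    exact if_pos (hmono (j + 1) t (by omega) ht)
  have h2 : ∑ j ∈ Finset.Ico t (m - 1), (if f (j + 1) ≤ f t then f (j + 1) - f j else 0)
      = 0 := by
    apply Finset.sum_eq_zero
    intro j hj
    rw [Finset.mem_Ico] at hj
    exact if_neg (not_le.mpr (hstrict t (j + 1) (by omega) (by omega)))
  rw [h1, h2, add_zero]

private lemma aux_mean (k m : ℕ) (r : Fin k → ℕ) (s : Fin k → ℚ) (f : ℕ → ℚ)
    (hmono : ∀ a b : ℕ, a ≤ b → b ≤ m - 1 → f a ≤ f b)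
    (hstrict : ∀ a b : ℕ, a < b → b ≤ m - 1 → f a < f b)
    (hs : ∀ i, ∃ t, t ≤ m - 1 ∧ f t = s i) :
    ∑ i, (r i : ℚ) * s i
      = (∑ i, (r i : ℚ)) * f 0 + ∑ j ∈ Finset.range (m - 1),
          (∑ i ∈ Finset.univ.filter (fun i => f (j + 1) ≤ s i), (r i : ℚ))
            * (f (j + 1) - f j) := by
  have key : ∀ i, s i = f 0 + ∑ j ∈ Finset.range (m - 1),
      (if f (j + 1) ≤ s i then f (j + 1) - f j else 0) := by
    intro i
    obtain ⟨t, ht, hft⟩ := hs i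
    rw [← hft]
    have := aux_telescope m f hmono hstrict t ht
    linarith
  calc ∑ i, (r i : ℚ) * s i
      = ∑ i, ((r i : ℚ) * f 0 + ∑ j ∈ Finset.range (m - 1),
          (if f (j + 1) ≤ s i then (r i : ℚ) * (f (j + 1) - f j) else 0)) := by
        refine Finset.sum_congr rfl fun i _ => ?_
        conv_lhs => rw [key i]
        rw [mul_add, Finset.mul_sum]
        congr 1
        refine Finset.sum_congr rfl fun j _ => ?_
        split <;> simp
    _ = (∑ i, (r i : ℚ)) * f 0 + ∑ j ∈ Finset.range (m - 1),
          ∑ i, (if f (j + 1) ≤ s i then (r i : ℚ) * (f (j + 1) - f j) else 0) := by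
        rw [Finset.sum_add_distrib, ← Finset.sum_mul, Finset.sum_comm]
    _ = _ := by
        congr 1
        refine Finset.sum_congr rfl fun j _ => ?_
        rw [Finset.sum_filter, Finset.sum_mul]
        refine Finset.sum_congr rfl fun i _ => ?_
        split <;> simp

/-- Let E and F be nonzero vector bundles on a smooth projective curve,
encoded by their Harder–Narasimhan data: `kE` (resp. `kF`) graded pieces with positive
ranks `rE i` and degrees `dE i`, whose slopes `sE i = dE i / rE i` are strictly
decreasing.  The term `E_(μ)` of the HN filtration has rank `∑_{sE i ≥ μ} rE i`.
If μ(E) > μ(F) then there is a rational μ with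
rk(E_(μ))/rk(E) > rk(F_(μ))/rk(F). -/
theorem exists_slope_rank_ratio_gt
    (kE kF : ℕ) (hkE : 0 < kE) (hkF : 0 < kF)
    (rE : Fin kE → ℕ) (dE : Fin kE → ℤ) (sE : Fin kE → ℚ)
    (rF : Fin kF → ℕ) (dF : Fin kF → ℤ) (sF : Fin kF → ℚ)
    (hrE : ∀ i, 0 < rE i) (hrF : ∀ i, 0 < rF i)
    (hsE : ∀ i, sE i = (dE i : ℚ) / (rE i : ℚ))
    (hsF : ∀ i, sF i = (dF i : ℚ) / (rF i : ℚ))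
    (hEdec : StrictAnti sE) (hFdec : StrictAnti sF)
    -- μ(E) > μ(F)
    (hslope : (∑ i, (dE i : ℚ)) / (∑ i, (rE i : ℚ))
            > (∑ i, (dF i : ℚ)) / (∑ i, (rF i : ℚ))) :
    ∃ μ : ℚ,
      (∑ i ∈ Finset.univ.filter (fun i => μ ≤ sE i), (rE i : ℚ)) / (∑ i, (rE i : ℚ))
        > (∑ i ∈ Finset.univ.filter (fun i => μ ≤ sF i), (rF i : ℚ)) / (∑ i, (rF i : ℚ)) := by
  by_contra hcon
  push_neg at hcon
  set RE := ∑ i, (rE i : ℚ) with hREdef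
  set RF := ∑ i, (rF i : ℚ) with hRFdef
  have hRE : 0 < RE := Finset.sum_pos (fun i _ => by exact_mod_cast hrE i)
    ⟨⟨0, hkE⟩, Finset.mem_univ _⟩
  have hRF : 0 < RF := Finset.sum_pos (fun i _ => by exact_mod_cast hrF i)
    ⟨⟨0, hkF⟩, Finset.mem_univ _⟩
  have hdE : ∀ i, (dE i : ℚ) = (rE i : ℚ) * sE i := by
    intro i
    have : (rE i : ℚ) ≠ 0 := by exact_mod_cast (hrE i).ne'
    rw [hsE i]; field_simp
  have hdF : ∀ i, (dF i : ℚ) = (rF i : ℚ) * sF i := by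
    intro i
    have : (rF i : ℚ) ≠ 0 := by exact_mod_cast (hrF i).ne'
    rw [hsF i]; field_simp
  set T : Finset ℚ := (Finset.univ.image sE) ∪ (Finset.univ.image sF) with hTdef
  set m := T.card with hmdef
  have hm : 0 < m := by
    rw [hmdef]
    apply Finset.card_pos.mpr
    exact ⟨sE ⟨0, hkE⟩, by simp [hTdef]⟩
  set e := T.orderIsoOfFin rfl with hedef
  set f : ℕ → ℚ := fun j => ((e ⟨min j (m - 1), by omega⟩ : T) : ℚ) with hfdef
  have hmono : ∀ a b : ℕ, a ≤ b → b ≤ m - 1 → f a ≤ f b := by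
    intro a b hab _
    simp only [hfdef]
    exact_mod_cast e.monotone (by simp [Fin.mk_le_mk]; omega)
  have hstrict : ∀ a b : ℕ, a < b → b ≤ m - 1 → f a < f b := by
    intro a b hab hb
    simp only [hfdef]
    exact_mod_cast e.strictMono (by simp [Fin.mk_lt_mk]; omega)
  have hmemf : ∀ x : ℚ, x ∈ T → ∃ t, t ≤ m - 1 ∧ f t = x := by
    intro x hx
    refine ⟨(e.symm ⟨x, hx⟩ : Fin m).val, by omega, ?_⟩
    simp only [hfdef]
    have h1 : (⟨min (e.symm ⟨x, hx⟩ : Fin m).val (m - 1), by omega⟩ : Fin m)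
        = e.symm ⟨x, hx⟩ := by
      apply Fin.ext
      simp
      omega
    rw [h1, OrderIso.apply_symm_apply]
  have hsEmem : ∀ i, ∃ t, t ≤ m - 1 ∧ f t = sE i := fun i =>
    hmemf _ (by simp [hTdef])
  have hsFmem : ∀ i, ∃ t, t ≤ m - 1 ∧ f t = sF i := fun i =>
    hmemf _ (by simp [hTdef])
  have idE := aux_mean kE m rE sE f hmono hstrict hsEmem
  have idF := aux_mean kF m rF sF f hmono hstrict hsFmem
  have step : ∀ μ : ℚ,
      RF * (∑ i ∈ Finset.univ.filter (fun i => μ ≤ sE i), (rE i : ℚ))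
        ≤ RE * (∑ i ∈ Finset.univ.filter (fun i => μ ≤ sF i), (rF i : ℚ)) := by
    intro μ
    have h := hcon μ
    rw [div_le_div_iff₀ hRE hRF] at h
    linarith
  have main : RF * (∑ i, (rE i : ℚ) * sE i) ≤ RE * (∑ i, (rF i : ℚ) * sF i) := by
    rw [idE, idF, mul_add, mul_add, Finset.mul_sum, Finset.mul_sum]
    have h1 : RF * (RE * f 0) = RE * (RF * f 0) := by ring
    rw [h1]
    apply add_le_add_right
    apply Finset.sum_le_sum
    intro j hj
    rw [Finset.mem_range] at hj
    have hΔ : 0 ≤ f (j + 1) - f j := by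
      have := hmono j (j + 1) (by omega) (by omega)
      linarith
    calc RF * ((∑ i ∈ Finset.univ.filter (fun i => f (j+1) ≤ sE i), (rE i : ℚ))
            * (f (j + 1) - f j))
        = (RF * ∑ i ∈ Finset.univ.filter (fun i => f (j+1) ≤ sE i), (rE i : ℚ))
            * (f (j + 1) - f j) := by ring
      _ ≤ (RE * ∑ i ∈ Finset.univ.filter (fun i => f (j+1) ≤ sF i), (rF i : ℚ))
            * (f (j + 1) - f j) := by
          exact mul_le_mul_of_nonneg_right (step (f (j + 1))) hΔ
      _ = RE * ((∑ i ∈ Finset.univ.filter (fun i => f (j+1) ≤ sF i), (rF i : ℚ))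
            * (f (j + 1) - f j)) := by ring
  rw [gt_iff_lt, div_lt_div_iff₀ hRF hRE] at hslope
  have hE : ∑ i, (dE i : ℚ) = ∑ i, (rE i : ℚ) * sE i :=
    Finset.sum_congr rfl fun i _ => hdE i
  have hF : ∑ i, (dF i : ℚ) = ∑ i, (rF i : ℚ) * sF i :=
    Finset.sum_congr rfl fun i _ => hdF i
  rw [hE, hF] at hslope
  linarith
end

section
/- Let S = (F_1 →^ψ F_0) be a triple of type α^⊥ (ψ surjective, rk(F_1) = 2 rk(F_0), μ(F_0) − μ(F_1) = α). Then for any triple T = (E_1 →^φ E_0), the map π = −φ⊗id_{F_0} + id_{E_0}⊗ψ : (E_1 ⊗ F_0) ⊕ (E_0 ⊗ F_1) → E_0 ⊗ F_0 is surjective, and its kernel satisfies rk(ker π) = rk(F_0)(rk E_1 + rk E_0) and μ(ker π) = μ_α(T) + μ(F_0). -/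
open CategoryTheory CategoryTheory.Limits MonoidalCategory

/-- Work in the abelian (monoidal) category of coherent sheaves on a
smooth projective curve X, with rank and degree functions that are additive in short
exact sequences and satisfy deg(A⊗B) = rk(A)deg(B) + rk(B)deg(A).  Let
S = (F₁ →^ψ F₀) be a triple of type α^⊥ (ψ surjective, rk F₁ = 2·rk F₀,
μ(F₀) − μ(F₁) = α).  Then for any triple T = (E₁ →^φ E₀) the map
π = −φ⊗id_{F₀} + id_{E₀}⊗ψ : (E₁ ⊗ F₀) ⊕ (E₀ ⊗ F₁) → E₀ ⊗ F₀ is surjective,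
rk(ker π) = rk(F₀)(rk E₁ + rk E₀) and μ(ker π) = μ_α(T) + μ(F₀). -/
theorem orthogonal_type_kernel_invariants
    {C : Type*} [Category C] [Abelian C] [MonoidalCategory C]
    (rk : C → ℕ) (deg : C → ℤ)
    -- multiplicativity under tensor product
    (hrk_tensor : ∀ A B : C, rk (A ⊗ B) = rk A * rk B)
    (hdeg_tensor : ∀ A B : C, deg (A ⊗ B) = (rk A : ℤ) * deg B + (rk B : ℤ) * deg A)
    -- additivity on direct sums
    (hrk_biprod : ∀ A B : C, rk (A ⊞ B) = rk A + rk B)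
    (hdeg_biprod : ∀ A B : C, deg (A ⊞ B) = deg A + deg B)
    -- additivity in the short exact sequence 0 → ker f → A → B → 0
    (hrk_ker : ∀ {A B : C} (f : A ⟶ B), Epi f → rk A = rk (kernel f) + rk B)
    (hdeg_ker : ∀ {A B : C} (f : A ⟶ B), Epi f → deg A = deg (kernel f) + deg B)
    -- tensoring with a surjection stays surjective
    (hepi_whisker : ∀ {A B : C} (X : C) (f : A ⟶ B), Epi f → Epi (X ◁ f))
    (α : ℚ)
    (F1 F0 : C) (ψ : F1 ⟶ F0) (hψ : Epi ψ)
    (hrkF : rk F1 = 2 * rk F0) (hF0 : 0 < rk F0)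
    (hαF : (deg F0 : ℚ) / (rk F0 : ℚ) - (deg F1 : ℚ) / (rk F1 : ℚ) = α)
    (E1 E0 : C) (φ : E1 ⟶ E0) (hT : 0 < rk E0 + rk E1) :
    Epi (biprod.desc (-(φ ▷ F0)) (E0 ◁ ψ))
    ∧ rk (kernel (biprod.desc (-(φ ▷ F0)) (E0 ◁ ψ))) = rk F0 * (rk E1 + rk E0)
    ∧ (deg (kernel (biprod.desc (-(φ ▷ F0)) (E0 ◁ ψ))) : ℚ)
          / (rk (kernel (biprod.desc (-(φ ▷ F0)) (E0 ◁ ψ))) : ℚ)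
      = ((deg E0 : ℚ) + (deg E1 : ℚ) - 2 * α * (rk E0 : ℚ))
          / ((rk E0 : ℚ) + (rk E1 : ℚ))
        + (deg F0 : ℚ) / (rk F0 : ℚ) := by
  set π := biprod.desc (-(φ ▷ F0)) (E0 ◁ ψ) with hπdef
  have h1 : Epi (E0 ◁ ψ) := hepi_whisker E0 ψ hψ
  have h2 : biprod.inr ≫ π = E0 ◁ ψ := biprod.inr_desc _ _
  have h3 : Epi (biprod.inr ≫ π) := h2 ▸ h1
  have hπepi : Epi π := epi_of_epi biprod.inr π
  have hrk := hrk_ker π hπepi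
  have hdeg := hdeg_ker π hπepi
  rw [hrk_biprod, hrk_tensor, hrk_tensor, hrk_tensor, hrkF] at hrk
  rw [hdeg_biprod, hdeg_tensor, hdeg_tensor, hdeg_tensor] at hdeg
  have hrkK : rk (kernel π) = rk F0 * (rk E1 + rk E0) := by
    zify at hrk ⊢
    linear_combination -hrk
  have hc : (rk F0 : ℚ) ≠ 0 := by positivity
  have hab : (rk E0 : ℚ) + (rk E1 : ℚ) ≠ 0 := by
    have : (0:ℚ) < (rk E0 : ℚ) + (rk E1 : ℚ) := by exact_mod_cast hT
    linarith
  have hF1 : (deg F1 : ℚ) = 2 * (deg F0 : ℚ) - 2 * α * (rk F0 : ℚ) := by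
    rw [hrkF] at hαF
    push_cast at hαF
    field_simp at hαF
    have h0 : (rk F0 : ℚ) * ((deg F1 : ℚ) - (2 * (deg F0 : ℚ) - 2 * α * (rk F0 : ℚ))) = 0 := by
      linear_combination -(rk F0 : ℚ) * hαF
    rcases mul_eq_zero.mp h0 with h | h
    · exact absurd h hc
    · linarith [sub_eq_zero.mp h]
  have hdegQ : (rk E1 : ℚ) * (deg F0 : ℚ) + (rk F0 : ℚ) * (deg E1 : ℚ)
      + ((rk E0 : ℚ) * (deg F1 : ℚ) + 2 * (rk F0 : ℚ) * (deg E0 : ℚ))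
      = (deg (kernel π) : ℚ) + ((rk E0 : ℚ) * (deg F0 : ℚ) + (rk F0 : ℚ) * (deg E0 : ℚ)) := by
    rw [hrkF] at hdeg
    exact_mod_cast hdeg
  have hK : (deg (kernel π) : ℚ)
      = (rk F0 : ℚ) * ((deg E0 : ℚ) + (deg E1 : ℚ) - 2 * α * (rk E0 : ℚ))
        + (deg F0 : ℚ) * ((rk E0 : ℚ) + (rk E1 : ℚ)) := by
    linear_combination (rk E0 : ℚ) * hF1 - hdegQ
  refine ⟨hπepi, hrkK, ?_⟩
  have hba : (rk E1 : ℚ) + (rk E0 : ℚ) ≠ 0 := by rw [add_comm]; exact hab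
  have hden : (rk F0 : ℚ) * ((rk E1 : ℚ) + (rk E0 : ℚ)) ≠ 0 := mul_ne_zero hc hba
  rw [hrkK, hK]
  push_cast
  rw [div_add_div _ _ hab hc, div_eq_div_iff hden (mul_ne_zero hab hc)]
  ring
end
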